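/- Let L be a real Lie algebra and let 𝒜 and 𝒜' be affine representations of L modeled on the same real vector space A and having the same linear parts, i.e. there is a representation ρ of L on A with x⃗_𝒜 = x⃗_{𝒜'} = ρ(x) for all x ∈ L. Fix a₀ ∈ 𝒜 and a₀' ∈ 𝒜'. Then there exists a linear map θ : End(A) → A such that t(x·a₀') = t(x·a₀) + ρ(x)(θ(t)) − θ(ρ(x)∘t − t∘ρ(x)) for all x ∈ L and all t ∈ End(A), if and only if there exists u ∈ A such that x·a₀' = x·a₀ + ρ(x)(u) for all x ∈ L (i.e. the basepoint cocycles of 𝒜 and 𝒜' are cohomologous). -/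
import Mathlib


/-- Let `𝒜`, `𝒜'` be affine representations of `L` modeled on the same vector
space `A`, with the same linear parts `ρ`. There exists a linear `θ : End(A) → A` with
`t(x·a₀') = t(x·a₀) + ρ(x)(θ(t)) − θ(ρ(x)∘t − t∘ρ(x))` for all `x`, `t`, iff there exists
`u ∈ A` with `x·a₀' = x·a₀ + ρ(x)(u)` for all `x` (the basepoint cocycles are cohomologous). -/
theorem first_sequences_isomorphic_iff_classes_equal
    {L : Type*} [LieRing L] [LieAlgebra ℝ L]
    {A : Type*} [AddCommGroup A] [Module ℝ A]
    {𝒜 : Type*} [AddTorsor A 𝒜]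
    {𝒜' : Type*} [AddTorsor A 𝒜']
    (ρ : L → A →ₗ[ℝ] A)
    (act : L → 𝒜 → A) (act' : L → 𝒜' → A)
    (hadd : ∀ (x y : L) (a : 𝒜), act (x + y) a = act x a + act y a)
    (hsmul : ∀ (r : ℝ) (x : L) (a : 𝒜), act (r • x) a = r • act x a)
    (haff : ∀ (x : L) (u : A) (a : 𝒜), act x (u +ᵥ a) = act x a + ρ x u)
    (hcoc : ∀ (x y : L) (a : 𝒜), ρ x (act y a) - ρ y (act x a) - act ⁅x, y⁆ a = 0)
    (hadd' : ∀ (x y : L) (a : 𝒜'), act' (x + y) a = act' x a + act' y a)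
    (hsmul' : ∀ (r : ℝ) (x : L) (a : 𝒜'), act' (r • x) a = r • act' x a)
    (haff' : ∀ (x : L) (u : A) (a : 𝒜'), act' x (u +ᵥ a) = act' x a + ρ x u)
    (hcoc' : ∀ (x y : L) (a : 𝒜'), ρ x (act' y a) - ρ y (act' x a) - act' ⁅x, y⁆ a = 0)
    (a₀ : 𝒜) (a₀' : 𝒜') :
    (∃ θ : (A →ₗ[ℝ] A) →ₗ[ℝ] A,
        ∀ (x : L) (t : A →ₗ[ℝ] A),
          t (act' x a₀') = t (act x a₀) + ρ x (θ t) - θ (ρ x ∘ₗ t - t ∘ₗ ρ x))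
      ↔ (∃ u : A, ∀ x : L, act' x a₀' = act x a₀ + ρ x u) := by
  constructor
  · rintro ⟨θ, hθ⟩
    refine ⟨θ LinearMap.id, fun x => ?_⟩
    have h := hθ x LinearMap.id
    simpa using h
  · rintro ⟨u, hu⟩
    refine ⟨{ toFun := fun t => t u,
              map_add' := fun s t => rfl,
              map_smul' := fun r t => rfl }, fun x t => ?_⟩
    simp [hu x, map_add]
    abel
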